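/- In Setup A, let S, S' ⊆ {1,…,n} be subsets containing {1,…,n'}, with integer families t = (t_i)_{i∈S} and t' = (t'_i)_{i∈S'}. If U(S,t) ⊆ U(S',t'), then S' ⊆ S and t_i ≥ t'_i for every i ∈ S'. -/

import Mathlib

open scoped RealInnerProductSpace BigOperators

noncomputable section

/-- Euclidean space `ℝⁿ` with the standard inner product. -/
abbrev E (n : ℕ) : Type := EuclideanSpace ℝ (Fin n)

/-- The index set `I' = {1,…,n'}` inside `{1,…,n}`. -/
def IprimeA (n n' : ℕ) : Finset (Fin n) := Finset.univ.filter fun i => i.val < n'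

/-- `v_{n+1} := a₁ v₁ + ⋯ + a_{n'} v_{n'}`. -/
def vLast (n n' : ℕ) (a : Fin n → ℚ) (v : Fin n → E n) : E n :=
  ∑ i ∈ IprimeA n n', (a i : ℝ) • v i

/-- `U(S,t) := {x ∈ ℝⁿ : ⟨x, v_i⟩ > t_i/r_i for all i ∈ S}`. -/
def USet (n : ℕ) (v : Fin n → E n) (r : Fin n → ℤ) (S : Finset (Fin n))
    (t : Fin n → ℤ) : Set (E n) :=
  {x | ∀ i ∈ S, ((t i : ℝ) / (r i : ℝ)) < ⟪x, v i⟫}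

/-- `t_{n+1}(t) := ⌈r_{n+1} · Σ_{k=1}^{n'} a_k t_k / r_k⌉`. -/
def tLast (n n' : ℕ) (a : Fin n → ℚ) (r : Fin n → ℤ) (rl : ℤ) (t : Fin n → ℤ) : ℤ :=
  ⌈(rl : ℚ) * ∑ k ∈ IprimeA n n', a k * (t k : ℚ) / (r k : ℚ)⌉

/-- `F(S,t) := {x ∈ U(S,t) : ⟨x, v_{n+1}⟩ > t_{n+1}(t)/r_{n+1}}`. -/
def FSetA (n n' : ℕ) (a : Fin n → ℚ) (v : Fin n → E n) (r : Fin n → ℤ) (rl : ℤ)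
    (S : Finset (Fin n)) (t : Fin n → ℤ) : Set (E n) :=
  {x | x ∈ USet n v r S t ∧
    ((tLast n n' a r rl t : ℝ) / (rl : ℝ)) < ⟪x, vLast n n' a v⟫}


lemma exists_inner_eq (n : ℕ) (v : Fin n → E n) (hv : LinearIndependent ℝ v)
    (c : Fin n → ℝ) : ∃ x : E n, ∀ i, ⟪x, v i⟫ = c i := by
  rcases Nat.eq_zero_or_pos n with rfl | hpos
  · exact ⟨0, fun i => i.elim0⟩
  haveI : Nonempty (Fin n) := ⟨⟨0, hpos⟩⟩
  have hcard : Fintype.card (Fin n) = Module.finrank ℝ (E n) := by simp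
  let B := basisOfLinearIndependentOfCardEqFinrank hv hcard
  have hB : ∀ i, B i = v i := fun i =>
    congrFun (coe_basisOfLinearIndependentOfCardEqFinrank hv hcard) i
  let f : E n →ₗ[ℝ] ℝ := B.constr ℝ c
  let g := LinearMap.toContinuousLinearMap f
  refine ⟨(InnerProductSpace.toDual ℝ (E n)).symm g, fun i => ?_⟩
  have h1 : ⟪(InnerProductSpace.toDual ℝ (E n)).symm g, v i⟫ = g (v i) :=
    InnerProductSpace.toDual_symm_apply
  rw [h1]
  show f (v i) = c i
  rw [← hB i]
  simp [f, Module.Basis.constr_basis]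

/-- Setup A: if `U(S,t) ⊆ U(S',t')` then `S' ⊆ S` and `t_i ≥ t'_i`
for every `i ∈ S'`. -/
theorem stmt15 (n n' : ℕ) (hn'1 : 1 ≤ n') (hn'n : n' ≤ n)
    (v : Fin n → E n) (hv : LinearIndependent ℝ v)
    (a : Fin n → ℚ) (ha : ∀ i : Fin n, i.val < n' → 0 < a i)
    (r : Fin n → ℤ) (hr : ∀ i, 0 < r i) (rl : ℤ) (hrl : 0 < rl)
    (S S' : Finset (Fin n)) (hS : IprimeA n n' ⊆ S) (hS' : IprimeA n n' ⊆ S')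
    (t t' : Fin n → ℤ)
    (hU : USet n v r S t ⊆ USet n v r S' t') :
    S' ⊆ S ∧ ∀ i ∈ S', t' i ≤ t i := by
  have key : ∀ c : Fin n → ℝ, ∃ x : E n, ∀ i, ⟪x, v i⟫ = c i :=
    exists_inner_eq n v hv
  have hrR : ∀ i : Fin n, (0:ℝ) < (r i : ℝ) := fun i => by exact_mod_cast hr i
  have hSS' : S' ⊆ S := by
    intro j hj
    by_contra hjS
    obtain ⟨x, hx⟩ := key (fun i => if i ∈ S then (t i : ℝ) / (r i : ℝ) + 1
      else (t' i : ℝ) / (r i : ℝ) - 1)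
    have hxU : x ∈ USet n v r S t := by
      intro i hi
      rw [hx i, if_pos hi]
      linarith
    have := hU hxU j hj
    rw [hx j, if_neg hjS] at this
    linarith
  refine ⟨hSS', fun i hi => ?_⟩
  by_contra h
  push_neg at h
  have hiS : i ∈ S := hSS' hi
  have hlt : (t i : ℝ) / (r i : ℝ) < (t' i : ℝ) / (r i : ℝ) := by
    apply div_lt_div_of_pos_right _ (hrR i)
    exact_mod_cast h
  set m : ℝ := ((t i : ℝ) / (r i : ℝ) + (t' i : ℝ) / (r i : ℝ)) / 2 with hm
  obtain ⟨x, hx⟩ := key (fun k => if k = i then m else (t k : ℝ) / (r k : ℝ) + 1)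
  have hxU : x ∈ USet n v r S t := by
    intro k hk
    rw [hx k]
    by_cases hki : k = i
    · rw [if_pos hki, hki]
      linarith
    · rw [if_neg hki]
      linarith
  have := hU hxU i hi
  rw [hx i, if_pos rfl] at this
  linarith
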